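/- Let $V \in C^2(\mathbb{R}^d)$ with $e^{-V}$ integrable, and suppose $|\nabla^2 V| \leq K(1+|\nabla V|^\alpha)$ for some $K < \infty$ and $\alpha \in [1,2)$. Then $|\nabla V| \in L^p(\mu_V)$ for every $1 \leq p < \infty$, where $\mu_V = Z^{-1}e^{-V}\,dx$ is the normalized probability measure. Consequently $|\nabla^2 V| \in L^p(\mu_V)$ for every $1 \leq p < \infty$ as well. -/

import Mathlib

open MeasureTheory Real Metric Set Filter ENNReal


private lemma norm_fderiv_fderiv_eq {d : ℕ} (V : EuclideanSpace ℝ (Fin d) → ℝ)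
    (x : EuclideanSpace ℝ (Fin d)) :
    ‖fderiv ℝ (fderiv ℝ V) x‖ = ‖iteratedFDeriv ℝ 2 V x‖ := by
  rw [← norm_iteratedFDeriv_fderiv]
  rw [iteratedFDeriv_succ_eq_comp_left]
  have h1 : (iteratedFDeriv ℝ 0 (fderiv ℝ V)) = (fun y =>
      (continuousMultilinearCurryFin0 ℝ (EuclideanSpace ℝ (Fin d)) (EuclideanSpace ℝ (Fin d) →L[ℝ] ℝ)).symm (fderiv ℝ V y)) := by
    ext y m; simp
  rw [Function.comp_apply, LinearIsometryEquiv.norm_map, h1]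
  rw [show (fun y => (continuousMultilinearCurryFin0 ℝ (EuclideanSpace ℝ (Fin d)) (EuclideanSpace ℝ (Fin d) →L[ℝ] ℝ)).symm (fderiv ℝ V y))
      = (⇑(continuousMultilinearCurryFin0 ℝ (EuclideanSpace ℝ (Fin d)) (EuclideanSpace ℝ (Fin d) →L[ℝ] ℝ)).symm ∘ fderiv ℝ V) from rfl]
  rw [LinearIsometryEquiv.comp_fderiv]
  exact (((continuousMultilinearCurryFin0 ℝ (EuclideanSpace ℝ (Fin d)) (EuclideanSpace ℝ (Fin d) →L[ℝ] ℝ)).symm.toLinearIsometry).norm_toContinuousLinearMap_comp (g := fderiv ℝ (fderiv ℝ V) x)).symm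

private lemma grad_bootstrap {d : ℕ} {V : EuclideanSpace ℝ (Fin d) → ℝ} (hV : ContDiff ℝ 2 V)
    {K' α : ℝ} (hK : 1 ≤ K') (hα1 : 1 ≤ α) (hα2 : α < 2)
    (hH : ∀ x, ‖fderiv ℝ (fderiv ℝ V) x‖ ≤ K' * (1 + ‖fderiv ℝ V x‖ ^ α))
    (x : EuclideanSpace ℝ (Fin d)) (hx : 1 ≤ ‖fderiv ℝ V x‖) :
    ∀ y ∈ Metric.closedBall x (‖fderiv ℝ V x‖ ^ (1 - α) / (64 * K')),
      ‖fderiv ℝ V y - fderiv ℝ V x‖ ≤ ‖fderiv ℝ V x‖ / 8 := by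
  have hg1 : ContDiff ℝ 1 (fderiv ℝ V) := hV.fderiv_right (by norm_num)
  have hg_cont : Continuous (fderiv ℝ V) := hg1.continuous
  have hg_diff : Differentiable ℝ (fderiv ℝ V) := hg1.differentiable (by norm_num)
  set h : ℝ := ‖fderiv ℝ V x‖ with hh_def
  have hh : (0:ℝ) < h := lt_of_lt_of_le one_pos hx
  have hK0 : (0:ℝ) < K' := lt_of_lt_of_le one_pos hK
  set T : ℝ := h ^ (1 - α) / (64 * K') with hT_def
  have hT0 : 0 < T := div_pos (Real.rpow_pos_of_pos hh _) (by positivity)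
  intro y hy
  by_contra hcon
  push_neg at hcon
  set ψ : ℝ → ℝ := fun s => ‖fderiv ℝ V (x + s • (y - x)) - fderiv ℝ V x‖ with hψ_def
  have hψ_cont : Continuous ψ := by
    apply Continuous.norm
    exact (hg_cont.comp (continuous_const.add (continuous_id.smul continuous_const))).sub continuous_const
  have hψ0 : ψ 0 = 0 := by simp [hψ_def]
  have hψ1 : h / 8 < ψ 1 := by simpa [hψ_def] using hcon
  set S : Set ℝ := {s | s ∈ Set.Icc (0:ℝ) 1 ∧ h / 8 ≤ ψ s} with hS_def
  have hS_closed : IsClosed S := by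
    have : S = Set.Icc (0:ℝ) 1 ∩ ψ ⁻¹' (Set.Ici (h/8)) := rfl
    rw [this]
    exact isClosed_Icc.inter (isClosed_Ici.preimage hψ_cont)
  have hS_ne : S.Nonempty := ⟨1, ⟨by norm_num, hψ1.le⟩⟩
  have hS_bdd : BddBelow S := ⟨0, fun s hs => hs.1.1⟩
  set s₀ : ℝ := sInf S with hs₀_def
  have hs₀S : s₀ ∈ S := hS_closed.csInf_mem hS_ne hS_bdd
  have hs₀pos : 0 < s₀ := by
    rcases lt_or_eq_of_le hs₀S.1.1 with h' | h'
    · exact h'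
    · exfalso; rw [← h'] at hs₀S; have := hs₀S.2; rw [hψ0] at this; linarith
  have hlt : ∀ s ∈ Set.Ico (0:ℝ) s₀, ψ s ≤ h / 8 := by
    intro s hs
    by_contra hbad
    push_neg at hbad
    have hsS : s ∈ S := ⟨⟨hs.1, le_trans hs.2.le hs₀S.1.2⟩, hbad.le⟩
    exact absurd (csInf_le hS_bdd hsS) (not_le.mpr hs.2)
  have hle : ∀ s ∈ Set.Icc (0:ℝ) s₀, ψ s ≤ h / 8 := by
    intro s hs
    have : Set.Icc (0:ℝ) s₀ ⊆ closure (Set.Ico (0:ℝ) s₀) := by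
      rw [closure_Ico hs₀pos.ne]
    have hcl : s ∈ closure (Set.Ico (0:ℝ) s₀) := this hs
    have hsub : Set.Ico (0:ℝ) s₀ ⊆ {t | ψ t ≤ h/8} := hlt
    have : s ∈ closure {t | ψ t ≤ h/8} := closure_mono hsub hcl
    have hcls : IsClosed {t | ψ t ≤ h/8} := isClosed_le hψ_cont continuous_const
    rwa [hcls.closure_eq] at this
  -- Mean value estimate on the segment from x to x + s₀ • (y - x)
  set b : EuclideanSpace ℝ (Fin d) := x + s₀ • (y - x) with hb_def
  have hseg : ∀ z ∈ segment ℝ x b, ‖fderiv ℝ (fderiv ℝ V) z‖ ≤ 3 * K' * h ^ α := by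
    intro z hz
    rw [segment_eq_image'] at hz
    obtain ⟨t, ht, rfl⟩ := hz
    have hbx : x + t • (b - x) = x + (t * s₀) • (y - x) := by
      simp [hb_def, smul_smul]
    simp only []
    rw [hbx]
    have hts : t * s₀ ∈ Set.Icc (0:ℝ) s₀ := by
      constructor
      · exact mul_nonneg ht.1 hs₀pos.le
      · calc t * s₀ ≤ 1 * s₀ := mul_le_mul_of_nonneg_right ht.2 hs₀pos.le
          _ = s₀ := one_mul _
    have hψb : ψ (t * s₀) ≤ h / 8 := hle _ hts
    have hgz : ‖fderiv ℝ V (x + (t * s₀) • (y - x))‖ ≤ 9 * h / 8 := by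
      have := norm_sub_norm_le (fderiv ℝ V (x + (t * s₀) • (y - x))) (fderiv ℝ V x)
      have h2 : ‖fderiv ℝ V (x + (t * s₀) • (y - x)) - fderiv ℝ V x‖ ≤ h/8 := hψb
      linarith [le_trans this h2]
    calc ‖fderiv ℝ (fderiv ℝ V) (x + (t * s₀) • (y - x))‖
        ≤ K' * (1 + ‖fderiv ℝ V (x + (t * s₀) • (y - x))‖ ^ α) := hH _
      _ ≤ K' * (1 + (9 * h / 8) ^ α) := by
          apply mul_le_mul_of_nonneg_left _ hK0.le
          apply add_le_add_right
          exact Real.rpow_le_rpow (norm_nonneg _) hgz (by linarith)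
      _ ≤ 3 * K' * h ^ α := by
          have h98 : (9 * h / 8) ^ α = (9/8 : ℝ) ^ α * h ^ α := by
            rw [← Real.mul_rpow (by norm_num) hh.le]; ring_nf
          have hexp : ((9:ℝ)/8) ^ α ≤ (9/8 : ℝ) ^ (2:ℝ) :=
            Real.rpow_le_rpow_of_exponent_le (by norm_num) hα2.le
          have h2 : ((9:ℝ)/8) ^ (2:ℝ) = 81/64 := by
            rw [show (2:ℝ) = ((2:ℕ):ℝ) by norm_num, Real.rpow_natCast]; norm_num
          have hha : 1 ≤ h ^ α := Real.one_le_rpow hx (by linarith)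
          rw [h98]
          have hBnn : (0:ℝ) ≤ h ^ α := Real.rpow_nonneg hh.le α
          have hAB : (9/8:ℝ)^α * h^α ≤ (81/64) * h^α := by
            apply mul_le_mul_of_nonneg_right _ hBnn
            rw [h2] at hexp; exact hexp
          have hfin : 1 + (9/8:ℝ)^α * h^α ≤ 3 * h^α := by nlinarith
          calc K' * (1 + (9/8:ℝ)^α * h^α) ≤ K' * (3 * h^α) :=
              mul_le_mul_of_nonneg_left hfin hK0.le
            _ = 3 * K' * h^α := by ring
  have hmvt : ψ s₀ ≤ 3 * K' * h ^ α * ‖b - x‖ := by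
    have := (convex_segment x b).norm_image_sub_le_of_norm_fderiv_le
      (f := fderiv ℝ V) (fun z _ => hg_diff z)
      hseg (left_mem_segment ℝ x b) (right_mem_segment ℝ x b)
    simpa [hψ_def, hb_def] using this
  have hbx_norm : ‖b - x‖ ≤ T := by
    have : b - x = s₀ • (y - x) := by simp [hb_def]
    rw [this, norm_smul, Real.norm_eq_abs, abs_of_nonneg hs₀pos.le]
    have hyx : ‖y - x‖ ≤ T := by
      rw [Metric.mem_closedBall, dist_eq_norm] at hy; exact hy
    calc s₀ * ‖y - x‖ ≤ 1 * T :=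
        mul_le_mul hs₀S.1.2 hyx (norm_nonneg _) (by norm_num)
      _ = T := one_mul _
  have hTα : 3 * K' * h ^ α * T = 3 * h / 64 := by
    rw [hT_def]
    have : h ^ α * h ^ (1 - α) = h := by
      rw [← Real.rpow_add hh]; norm_num
    field_simp
    nlinarith [this]
  have : h / 8 ≤ 3 * h / 64 := by
    calc h / 8 ≤ ψ s₀ := hs₀S.2
      _ ≤ 3 * K' * h ^ α * ‖b - x‖ := hmvt
      _ ≤ 3 * K' * h ^ α * T := by
          apply mul_le_mul_of_nonneg_left hbx_norm
          positivity
      _ = 3 * h / 64 := hTα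
  linarith




private lemma key_bound {d : ℕ} {V : EuclideanSpace ℝ (Fin d) → ℝ} (hV : ContDiff ℝ 2 V)
    {K' α : ℝ} (hK : 1 ≤ K') (hα1 : 1 ≤ α) (hα2 : α < 2)
    (hH : ∀ x, ‖fderiv ℝ (fderiv ℝ V) x‖ ≤ K' * (1 + ‖fderiv ℝ V x‖ ^ α))
    (x : EuclideanSpace ℝ (Fin d)) (hx : 1 ≤ ‖fderiv ℝ V x‖) :
    ∃ z : EuclideanSpace ℝ (Fin d),
      Metric.closedBall z (‖fderiv ℝ V x‖ ^ (1 - α) / (640 * K')) ⊆ Metric.closedBall x 1 ∧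
      ∀ y ∈ Metric.closedBall z (‖fderiv ℝ V x‖ ^ (1 - α) / (640 * K')),
        V y ≤ V x - ‖fderiv ℝ V x‖ ^ (2 - α) / (128 * K') := by
  have hboot := grad_bootstrap hV hK hα1 hα2 hH x hx
  set h : ℝ := ‖fderiv ℝ V x‖ with hh_def
  have hh : (0:ℝ) < h := lt_of_lt_of_le one_pos hx
  have hK0 : (0:ℝ) < K' := lt_of_lt_of_le one_pos hK
  set T : ℝ := h ^ (1 - α) / (64 * K') with hT_def
  have hT0 : 0 < T := div_pos (Real.rpow_pos_of_pos hh _) (by positivity)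
  have hrad : h ^ (1 - α) / (640 * K') = T / 10 := by rw [hT_def]; ring
  have hTle : T ≤ 1 := by
    have hpow : h ^ (1 - α) ≤ 1 :=
      Real.rpow_le_one_of_one_le_of_nonpos hx (by linarith)
    rw [hT_def, div_le_one (by positivity)]
    nlinarith
  set u : EuclideanSpace ℝ (Fin d) := h⁻¹ • gradient V x with hu_def
  have hgradnorm : ‖gradient V x‖ = h := by
    rw [gradient]; exact LinearIsometryEquiv.norm_map _ _
  have hu : ‖u‖ = 1 := by
    rw [hu_def, norm_smul, hgradnorm, Real.norm_eq_abs, abs_of_nonneg (by positivity)]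
    field_simp
  have hinner : ∀ v, fderiv ℝ V x v = inner ℝ (gradient V x) v := by
    intro v; rw [gradient]; simp [InnerProductSpace.toDual_symm_apply]
  have hgxu : fderiv ℝ V x u = h := by
    rw [hu_def, ContinuousLinearMap.map_smul, smul_eq_mul, hinner, real_inner_self_eq_norm_sq, hgradnorm]
    field_simp
  set z : EuclideanSpace ℝ (Fin d) := x - (3 * T / 4) • u with hz_def
  have hzx : dist z x = 3 * T / 4 := by
    rw [hz_def, dist_eq_norm]
    simp only [sub_sub_cancel_left]
    rw [norm_neg, norm_smul, hu, Real.norm_eq_abs, abs_of_nonneg (by positivity)]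
    ring
  have hsub_xT : Metric.closedBall z (T / 10) ⊆ Metric.closedBall x T := by
    intro y hy
    rw [Metric.mem_closedBall] at hy ⊢
    calc dist y x ≤ dist y z + dist z x := dist_triangle y z x
      _ ≤ T / 10 + 3 * T / 4 := by rw [hzx]; linarith
      _ ≤ T := by linarith
  refine ⟨z, ?_, ?_⟩
  · rw [hrad]
    exact hsub_xT.trans (Metric.closedBall_subset_closedBall hTle)
  intro y hy
  rw [hrad] at hy
  set w : EuclideanSpace ℝ (Fin d) := y - x with hw_def
  have hw : ‖w‖ ≤ T := by
    have := hsub_xT hy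
    rw [Metric.mem_closedBall, dist_eq_norm] at this
    exact this
  set ρ : ℝ → ℝ := fun s => V (x + s • w) with hρ_def
  have hρ : ∀ s : ℝ, HasDerivAt ρ (fderiv ℝ V (x + s • w) w) s := by
    intro s
    have hline : HasDerivAt (fun s : ℝ => x + s • w) w s := by
      simpa using ((hasDerivAt_id s).smul_const w).const_add x
    exact ((hV.differentiable (by norm_num) _).hasFDerivAt).comp_hasDerivAt s hline
  have hmemT : ∀ s ∈ Set.Icc (0:ℝ) 1, x + s • w ∈ Metric.closedBall x T := by
    intro s hs
    rw [Metric.mem_closedBall, dist_eq_norm, add_sub_cancel_left, norm_smul,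
      Real.norm_eq_abs, abs_of_nonneg hs.1]
    calc s * ‖w‖ ≤ 1 * ‖w‖ := mul_le_mul_of_nonneg_right hs.2 (norm_nonneg _)
      _ = ‖w‖ := one_mul _
      _ ≤ T := hw
  have hderiv_bound : ∀ s ∈ Set.Icc (0:ℝ) 1, fderiv ℝ V (x + s • w) w ≤ -(h * T / 2) := by
    intro s hs
    set cs : EuclideanSpace ℝ (Fin d) := x + s • w with hcs_def
    have he : ‖fderiv ℝ V cs - fderiv ℝ V x‖ ≤ h / 8 := hboot cs (hmemT s hs)
    have hcsnorm : ‖fderiv ℝ V cs‖ ≤ 9 * h / 8 := by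
      have := norm_sub_norm_le (fderiv ℝ V cs) (fderiv ℝ V x)
      linarith [le_trans this he]
    have hw_decomp : w = (y - z) - (3 * T / 4) • u := by
      rw [hw_def, hz_def]; abel
    have expand : fderiv ℝ V cs w
        = fderiv ℝ V cs (y - z) - (3 * T / 4) * fderiv ℝ V cs u := by
      conv_lhs => rw [hw_decomp]
      rw [map_sub, ContinuousLinearMap.map_smul, smul_eq_mul]
    have hyz : ‖y - z‖ ≤ T / 10 := by
      rw [Metric.mem_closedBall, dist_eq_norm] at hy; exact hy
    have h1 : fderiv ℝ V cs (y - z) ≤ (9 * h / 8) * (T / 10) := by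
      calc fderiv ℝ V cs (y - z) ≤ |fderiv ℝ V cs (y - z)| := le_abs_self _
        _ = ‖fderiv ℝ V cs (y - z)‖ := (Real.norm_eq_abs _).symm
        _ ≤ ‖fderiv ℝ V cs‖ * ‖y - z‖ := (fderiv ℝ V cs).le_opNorm _
        _ ≤ (9 * h / 8) * (T / 10) :=
            mul_le_mul hcsnorm hyz (norm_nonneg _) (by positivity)
    have h2 : 7 * h / 8 ≤ fderiv ℝ V cs u := by
      have heq : fderiv ℝ V cs u = fderiv ℝ V x u + (fderiv ℝ V cs - fderiv ℝ V x) u := by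
        simp
      rw [heq, hgxu]
      have habs : |(fderiv ℝ V cs - fderiv ℝ V x) u| ≤ h / 8 := by
        rw [← Real.norm_eq_abs]
        calc ‖(fderiv ℝ V cs - fderiv ℝ V x) u‖
            ≤ ‖fderiv ℝ V cs - fderiv ℝ V x‖ * ‖u‖ := (fderiv ℝ V cs - fderiv ℝ V x).le_opNorm _
          _ = ‖fderiv ℝ V cs - fderiv ℝ V x‖ := by rw [hu, mul_one]
          _ ≤ h / 8 := he
      linarith [neg_abs_le ((fderiv ℝ V cs - fderiv ℝ V x) u)]
    rw [expand]
    have h3 : (3 * T / 4) * (7 * h / 8) ≤ (3 * T / 4) * fderiv ℝ V cs u :=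
      mul_le_mul_of_nonneg_left h2 (by positivity)
    nlinarith [mul_pos hh hT0]
  set F : ℝ → ℝ := fun s => ρ s + (h * T / 2) * s with hF_def
  have hFd : ∀ s : ℝ, HasDerivAt F (fderiv ℝ V (x + s • w) w + h * T / 2) s := by
    intro s
    have := (hρ s).add (((hasDerivAt_id s).const_mul (h * T / 2)))
    exact this.congr_deriv (by ring)
  have hanti : AntitoneOn F (Set.Icc (0:ℝ) 1) := by
    apply antitoneOn_of_deriv_nonpos (convex_Icc 0 1)
    · exact fun s _ => ((hFd s).continuousAt.continuousWithinAt)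
    · intro s hs
      exact ((hFd s).differentiableAt).differentiableWithinAt
    · intro s hs
      rw [interior_Icc] at hs
      rw [(hFd s).deriv]
      have := hderiv_bound s ⟨hs.1.le, hs.2.le⟩
      linarith
  have hF := hanti (Set.left_mem_Icc.mpr (by norm_num)) (Set.right_mem_Icc.mpr (by norm_num))
    (by norm_num : (0:ℝ) ≤ 1)
  have hρ0 : ρ 0 = V x := by simp [hρ_def]
  have hρ1 : ρ 1 = V y := by simp [hρ_def, hw_def]
  have hfinal : V y + h * T / 2 ≤ V x := by
    have h0 : F 0 = V x := by rw [hF_def]; simp [hρ0]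
    have h1 : F 1 = V y + h * T / 2 := by rw [hF_def]; simp [hρ1]
    rw [h0, h1] at hF
    exact hF
  have hpow2 : h ^ (2 - α) = h * h ^ (1 - α) := by
    rw [show (2 - α : ℝ) = 1 + (1 - α) by ring, Real.rpow_add hh, Real.rpow_one]
  have : h ^ (2 - α) / (128 * K') = h * T / 2 := by
    rw [hpow2, hT_def]; ring
  rw [this]
  linarith


private lemma sup_bound (γ : ℝ) {c β : ℝ} (hc : 0 < c) (hβ : 0 < β) :
    ∃ C : ℝ, 0 ≤ C ∧ ∀ t : ℝ, 1 ≤ t → t ^ γ * Real.exp (-(c * t ^ β)) ≤ C := by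
  set δ : ℝ := γ / β with hδ_def
  set g : ℝ → ℝ := fun s => s ^ δ * Real.exp (-c * s) with hg_def
  have htend : Tendsto g atTop (nhds 0) :=
    tendsto_rpow_mul_exp_neg_mul_atTop_nhds_zero δ c hc
  obtain ⟨s₀, hs₀⟩ := (htend.eventually_lt_const (by norm_num : (0:ℝ) < 1)).exists_forall_of_atTop
  have hgcont : ContinuousOn g (Set.Icc 1 (max s₀ 1)) := by
    apply ContinuousOn.mul
    · apply ContinuousOn.rpow_const continuousOn_id
      intro s hs
      refine Or.inl ?_
      simp only [Set.mem_Icc] at hs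
      intro h0
      rw [show id s = s from rfl] at h0
      rw [h0] at hs
      linarith [hs.1]
    · exact (Real.continuous_exp.comp (continuous_const.mul continuous_id)).continuousOn
  obtain ⟨C₀, hC₀⟩ := (isCompact_Icc).exists_bound_of_continuousOn hgcont
  refine ⟨max C₀ 1, le_trans (by norm_num) (le_max_right _ _), ?_⟩
  intro t ht
  have ht0 : (0:ℝ) < t := lt_of_lt_of_le one_pos ht
  set s : ℝ := t ^ β with hs_def
  have hs1 : 1 ≤ s := Real.one_le_rpow ht hβ.le
  have hkey : t ^ γ * Real.exp (-(c * t ^ β)) = g s := by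
    rw [hg_def]
    have : (t ^ β) ^ δ = t ^ γ := by
      rw [← Real.rpow_mul ht0.le]
      congr 1
      rw [hδ_def]; field_simp [hβ.ne']
    simp only [hs_def, this, neg_mul]
  rw [hkey]
  rcases le_total s (max s₀ 1) with hcase | hcase
  · have := hC₀ s ⟨hs1, hcase⟩
    calc g s ≤ ‖g s‖ := le_norm_self _
      _ ≤ C₀ := this
      _ ≤ max C₀ 1 := le_max_left _ _
  · have hss₀ : s₀ ≤ s := le_trans (le_max_left _ _) hcase
    calc g s ≤ 1 := (hs₀ s hss₀).le
      _ ≤ max C₀ 1 := le_max_right _ _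






private lemma lint_finite {d : ℕ} {V : EuclideanSpace ℝ (Fin d) → ℝ} (hV : ContDiff ℝ 2 V)
    (hint : Integrable (fun x => Real.exp (-V x)))
    {K' α : ℝ} (hK : 1 ≤ K') (hα1 : 1 ≤ α) (hα2 : α < 2)
    (hH : ∀ x, ‖fderiv ℝ (fderiv ℝ V) x‖ ≤ K' * (1 + ‖fderiv ℝ V x‖ ^ α)) :
    ∀ q : ℝ, 0 ≤ q →
      ∫⁻ x, ENNReal.ofReal (‖fderiv ℝ V x‖ ^ q * Real.exp (-V x)) < ⊤ := by
  intro q hq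
  classical
  have hVc : Continuous V := hV.continuous
  have hK0 : (0:ℝ) < K' := lt_of_lt_of_le one_pos hK
  set f : EuclideanSpace ℝ (Fin d) → ℝ≥0∞ := fun x => ENNReal.ofReal (Real.exp (-V x))
    with hf_def
  have hf_meas : Measurable f :=
    ENNReal.measurable_ofReal.comp (Real.continuous_exp.comp hVc.neg).measurable
  set Z' : ℝ≥0∞ := ∫⁻ x, f x with hZ'_def
  have hZ' : Z' < ⊤ := hint.lintegral_lt_top
  set cd : ℝ≥0∞ := volume (Metric.closedBall (0 : EuclideanSpace ℝ (Fin d)) 1) with hcd_def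
  have hcd0 : 0 < cd := measure_closedBall_pos _ _ one_pos
  have hcdt : cd < ⊤ := measure_closedBall_lt_top
  set B : EuclideanSpace ℝ (Fin d) → ℝ≥0∞ := fun x => ∫⁻ y in Metric.closedBall x 1, f y
    with hB_def
  set F : (EuclideanSpace ℝ (Fin d)) × (EuclideanSpace ℝ (Fin d)) → ℝ≥0∞ :=
    fun p => if dist p.1 p.2 ≤ 1 then f p.2 else 0 with hF_def
  have hF_meas : Measurable F := by
    apply Measurable.ite
    · exact (isClosed_le (continuous_fst.dist continuous_snd) continuous_const).measurableSet
    · exact hf_meas.comp measurable_snd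
    · exact measurable_const
  have hBF : ∀ x, B x = ∫⁻ y, F (x, y) := by
    intro x
    show ∫⁻ y in Metric.closedBall x 1, f y = _
    rw [← lintegral_indicator measurableSet_closedBall _]
    congr 1; ext y
    rw [Set.indicator_apply]
    simp only [Metric.mem_closedBall, hF_def]
    by_cases hxy : dist y x ≤ 1
    · rw [if_pos hxy, if_pos (by rwa [dist_comm])]
    · rw [if_neg hxy, if_neg (by rwa [dist_comm])]
  have hB_meas : Measurable B := by
    have : B = fun x => ∫⁻ y, F (x, y) := funext hBF
    rw [this]
    exact hF_meas.lintegral_prod_right'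
  have hBint : ∫⁻ x, B x = cd * Z' := by
    calc ∫⁻ x, B x = ∫⁻ x, ∫⁻ y, F (x, y) := by simp_rw [hBF]
      _ = ∫⁻ y, ∫⁻ x, F (x, y) := lintegral_lintegral_swap hF_meas.aemeasurable
      _ = ∫⁻ y, f y * cd := by
          apply lintegral_congr
          intro y
          have heq : (fun x => F (x, y)) = (Metric.closedBall y 1).indicator (fun _ => f y) := by
            ext x
            rw [Set.indicator_apply]
            simp only [Metric.mem_closedBall, hF_def]
          calc ∫⁻ x, F (x, y) = ∫⁻ x, (Metric.closedBall y 1).indicator (fun _ => f y) x := by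
                rw [heq]
            _ = ∫⁻ x in Metric.closedBall y 1, f y := by
                rw [lintegral_indicator measurableSet_closedBall _]
            _ = f y * volume (Metric.closedBall y 1) := setLIntegral_const _ _
            _ = f y * cd := by rw [Measure.addHaar_closedBall_center]
      _ = cd * Z' := by
          rw [lintegral_mul_const _ hf_meas, hZ'_def, mul_comm]
  obtain ⟨C, hC0, hCb⟩ := sup_bound (q + (α - 1) * d)
    (show (0:ℝ) < 1 / (128 * K') by positivity) (show (0:ℝ) < 2 - α by linarith)
  set D : ℝ≥0∞ := ENNReal.ofReal (C * (640 * K') ^ d) * cd⁻¹ with hD_def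
  have hpt : ∀ x, ENNReal.ofReal (‖fderiv ℝ V x‖ ^ q * Real.exp (-V x)) ≤ f x + D * B x := by
    intro x
    rcases lt_or_ge ‖fderiv ℝ V x‖ 1 with hsmall | hbig
    · have h1 : ‖fderiv ℝ V x‖ ^ q ≤ 1 := Real.rpow_le_one (norm_nonneg _) hsmall.le hq
      have h2 : ‖fderiv ℝ V x‖ ^ q * Real.exp (-V x) ≤ Real.exp (-V x) := by
        nlinarith [Real.exp_pos (-V x), Real.rpow_nonneg (norm_nonneg (fderiv ℝ V x)) q]
      calc ENNReal.ofReal (‖fderiv ℝ V x‖ ^ q * Real.exp (-V x))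
          ≤ ENNReal.ofReal (Real.exp (-V x)) := ENNReal.ofReal_le_ofReal h2
        _ ≤ f x + D * B x := le_self_add
    · obtain ⟨z, hz_sub, hz_dec⟩ := key_bound hV hK hα1 hα2 hH x hbig
      set h : ℝ := ‖fderiv ℝ V x‖ with hh_def
      have hh : (0:ℝ) < h := lt_of_lt_of_le one_pos hbig
      set r : ℝ := h ^ (1 - α) / (640 * K') with hr_def
      have hr0 : 0 < r := div_pos (Real.rpow_pos_of_pos hh _) (by positivity)
      set c' : ℝ := h ^ (2 - α) / (128 * K') with hc'_def
      have hc'0 : 0 < c' := div_pos (Real.rpow_pos_of_pos hh _) (by positivity)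
      have hstep1 : ENNReal.ofReal (Real.exp (c' - V x)) * volume (Metric.closedBall z r)
          ≤ ∫⁻ y in Metric.closedBall z r, f y := by
        rw [← setLIntegral_const]
        apply setLIntegral_mono hf_meas
        intro y hy
        apply ENNReal.ofReal_le_ofReal
        apply Real.exp_le_exp.mpr
        have := hz_dec y hy
        linarith
      have hstep2 : ∫⁻ y in Metric.closedBall z r, f y ≤ B x := lintegral_mono_set hz_sub
      have hvol : volume (Metric.closedBall z r) = ENNReal.ofReal (r ^ d) * cd := by
        rw [Measure.addHaar_closedBall' _ _ hr0.le, finrank_euclideanSpace_fin]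
      have hab : ENNReal.ofReal (Real.exp (c' - V x)) * ENNReal.ofReal (r ^ d) * cd ≤ B x := by
        calc ENNReal.ofReal (Real.exp (c' - V x)) * ENNReal.ofReal (r ^ d) * cd
            = ENNReal.ofReal (Real.exp (c' - V x)) * volume (Metric.closedBall z r) := by
              rw [hvol, mul_assoc]
          _ ≤ B x := le_trans hstep1 hstep2
      have hkey_real : h ^ q * Real.exp (-c') ≤ C * (640 * K') ^ d * r ^ d := by
        have hrd : r ^ d = h ^ ((1 - α) * (d:ℝ)) / (640 * K') ^ d := by
          rw [hr_def, div_pow]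
          congr 1
          rw [← Real.rpow_natCast (h ^ (1 - α)) d, ← Real.rpow_mul hh.le]
        have hrhs : C * (640 * K') ^ d * r ^ d = C * h ^ ((1 - α) * (d:ℝ)) := by
          rw [hrd]
          field_simp
        rw [hrhs]
        have hqγ : h ^ q = h ^ (q + (α - 1) * (d:ℝ)) * h ^ ((1 - α) * (d:ℝ)) := by
          rw [← Real.rpow_add hh]; congr 1; ring
        rw [hqγ]
        have hc'e : -c' = -(1 / (128 * K') * h ^ (2 - α)) := by rw [hc'_def]; ring
        rw [hc'e]
        have hCb' := hCb h hbig
        have hpw : (0:ℝ) ≤ h ^ ((1 - α) * (d:ℝ)) := Real.rpow_nonneg hh.le _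
        calc h ^ (q + (α - 1) * (d:ℝ)) * h ^ ((1 - α) * (d:ℝ))
              * Real.exp (-(1 / (128 * K') * h ^ (2 - α)))
            = (h ^ (q + (α - 1) * (d:ℝ)) * Real.exp (-(1 / (128 * K') * h ^ (2 - α))))
              * h ^ ((1 - α) * (d:ℝ)) := by ring
          _ ≤ C * h ^ ((1 - α) * (d:ℝ)) := mul_le_mul_of_nonneg_right hCb' hpw
      have hsplit : ENNReal.ofReal (h ^ q * Real.exp (-V x))
          = ENNReal.ofReal (h ^ q * Real.exp (-c')) * ENNReal.ofReal (Real.exp (c' - V x)) := by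
        rw [← ENNReal.ofReal_mul (by positivity)]
        congr 1
        rw [mul_assoc, ← Real.exp_add]
        congr 2
        ring
      rw [hsplit]
      have hmul1 : ENNReal.ofReal (h ^ q * Real.exp (-c'))
          ≤ ENNReal.ofReal (C * (640 * K') ^ d) * ENNReal.ofReal (r ^ d) := by
        rw [← ENNReal.ofReal_mul (by positivity)]
        exact ENNReal.ofReal_le_ofReal hkey_real
      have hcdne : cd ≠ 0 := hcd0.ne'
      have hcdnetop : cd ≠ ⊤ := hcdt.ne
      calc ENNReal.ofReal (h ^ q * Real.exp (-c')) * ENNReal.ofReal (Real.exp (c' - V x))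
          ≤ (ENNReal.ofReal (C * (640 * K') ^ d) * ENNReal.ofReal (r ^ d))
            * ENNReal.ofReal (Real.exp (c' - V x)) := mul_le_mul_left hmul1 _
        _ = ENNReal.ofReal (C * (640 * K') ^ d) * cd⁻¹
            * (ENNReal.ofReal (Real.exp (c' - V x)) * ENNReal.ofReal (r ^ d) * cd) := by
            have hcc : cd⁻¹ * cd = 1 := ENNReal.inv_mul_cancel hcd0.ne' hcdt.ne
            calc ENNReal.ofReal (C * (640 * K') ^ d) * ENNReal.ofReal (r ^ d)
                  * ENNReal.ofReal (Real.exp (c' - V x))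
                = ENNReal.ofReal (C * (640 * K') ^ d)
                  * (ENNReal.ofReal (Real.exp (c' - V x)) * ENNReal.ofReal (r ^ d))
                  * (cd⁻¹ * cd) := by rw [hcc, mul_one]; ring
              _ = _ := by ring
        _ ≤ D * B x := by
            rw [hD_def]
            exact mul_le_mul_right hab _
        _ ≤ f x + D * B x := le_add_self
  calc ∫⁻ x, ENNReal.ofReal (‖fderiv ℝ V x‖ ^ q * Real.exp (-V x))
      ≤ ∫⁻ x, (f x + D * B x) := lintegral_mono hpt
    _ = Z' + D * (cd * Z') := by
        rw [lintegral_add_left hf_meas, lintegral_const_mul D hB_meas, hBint]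
    _ < ⊤ := by
        apply ENNReal.add_lt_top.mpr
        constructor
        · exact hZ'
        · apply ENNReal.mul_lt_top
          · apply ENNReal.mul_lt_top ENNReal.ofReal_lt_top
            exact ENNReal.inv_lt_top.mpr hcd0
          · exact ENNReal.mul_lt_top hcdt hZ'






theorem gradV_in_all_Lp (d : ℕ) (V : EuclideanSpace ℝ (Fin d) → ℝ)
    (hV : ContDiff ℝ 2 V)
    (hint : Integrable (fun x => Real.exp (-V x)))
    (K α : ℝ) (hα1 : 1 ≤ α) (hα2 : α < 2)
    (hHess : ∀ x, ‖iteratedFDeriv ℝ 2 V x‖ ≤ K * (1 + ‖gradient V x‖ ^ α)) :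
    ∀ p : ℝ, 1 ≤ p →
      Integrable (fun x => ‖gradient V x‖ ^ p)
        ((volume : Measure (EuclideanSpace ℝ (Fin d))).withDensity
          fun x => ENNReal.ofReal ((∫ y, Real.exp (-V y))⁻¹ * Real.exp (-V x)))
      ∧ Integrable (fun x => ‖iteratedFDeriv ℝ 2 V x‖ ^ p)
        ((volume : Measure (EuclideanSpace ℝ (Fin d))).withDensity
          fun x => ENNReal.ofReal ((∫ y, Real.exp (-V y))⁻¹ * Real.exp (-V x))) := by
  have hVc : Continuous V := hV.continuous
  have hg1 : ContDiff ℝ 1 (fderiv ℝ V) := hV.fderiv_right (by norm_num)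
  have hg_cont : Continuous (fun x => fderiv ℝ V x) := hg1.continuous
  have hgrad_eq : ∀ x, ‖gradient V x‖ = ‖fderiv ℝ V x‖ := by
    intro x; rw [gradient]; exact LinearIsometryEquiv.norm_map _ _
  set K' : ℝ := max K 1 with hK'_def
  have hK'1 : 1 ≤ K' := le_max_right _ _
  have hH' : ∀ x, ‖fderiv ℝ (fderiv ℝ V) x‖ ≤ K' * (1 + ‖fderiv ℝ V x‖ ^ α) := by
    intro x
    rw [norm_fderiv_fderiv_eq, ← hgrad_eq]
    calc ‖iteratedFDeriv ℝ 2 V x‖ ≤ K * (1 + ‖gradient V x‖ ^ α) := hHess x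
      _ ≤ K' * (1 + ‖gradient V x‖ ^ α) := by
          apply mul_le_mul_of_nonneg_right (le_max_left _ _)
          positivity
  set Z : ℝ := ∫ y, Real.exp (-V y) with hZ_def
  have hZpos : 0 < Z := by
    rw [hZ_def]
    apply (integral_pos_iff_support_of_nonneg (fun x => (Real.exp_pos _).le) hint).mpr
    have hsupp : Function.support (fun x => Real.exp (-V x)) = Set.univ :=
      Set.eq_univ_of_forall fun x => (Real.exp_pos _).ne'
    rw [hsupp]
    exact isOpen_univ.measure_pos volume Set.univ_nonempty
  set ρ : EuclideanSpace ℝ (Fin d) → ℝ≥0∞ :=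
    fun x => ENNReal.ofReal (Z⁻¹ * Real.exp (-V x)) with hρ_def
  have hρ_meas : Measurable ρ :=
    ENNReal.measurable_ofReal.comp
      ((continuous_const.mul (Real.continuous_exp.comp hVc.neg)).measurable)
  have hρ_lt : ∀ᵐ x ∂(volume : Measure (EuclideanSpace ℝ (Fin d))), ρ x < ⊤ :=
    Filter.Eventually.of_forall fun x => ENNReal.ofReal_lt_top
  have htoReal : ∀ x, (ρ x).toReal = Z⁻¹ * Real.exp (-V x) :=
    fun x => ENNReal.toReal_ofReal (by positivity)
  have main : ∀ q : ℝ, 0 ≤ q →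
      Integrable (fun x => ‖gradient V x‖ ^ q) (volume.withDensity ρ) := by
    intro q hq
    rw [integrable_withDensity_iff hρ_meas hρ_lt]
    have hInt : Integrable (fun x => ‖fderiv ℝ V x‖ ^ q * Real.exp (-V x)) volume := by
      constructor
      · exact ((hg_cont.norm.rpow_const fun x => Or.inr hq).mul
          (Real.continuous_exp.comp hVc.neg)).aestronglyMeasurable
      · rw [hasFiniteIntegral_iff_ofReal (Filter.Eventually.of_forall fun x => by positivity)]
        exact lint_finite hV hint hK'1 hα1 hα2 hH' q hq
    have heq : (fun x => ‖gradient V x‖ ^ q * (ρ x).toReal)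
        = fun x => Z⁻¹ * (‖fderiv ℝ V x‖ ^ q * Real.exp (-V x)) := by
      funext x
      rw [htoReal, hgrad_eq]
      ring
    rw [heq]
    exact hInt.const_mul Z⁻¹
  intro p hp
  have hp0 : (0:ℝ) ≤ p := by linarith
  constructor
  · exact main p hp0
  · have hone : Integrable (fun _ : EuclideanSpace ℝ (Fin d) => (1:ℝ)) (volume.withDensity ρ) := by
      have := main 0 le_rfl
      apply this.congr
      exact Filter.Eventually.of_forall fun x => by simp [Real.rpow_zero]
    have hαp : Integrable (fun x => ‖gradient V x‖ ^ (α * p)) (volume.withDensity ρ) :=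
      main (α * p) (by positivity)
    have hg1 : Integrable
        (fun x => (2 * K') ^ p * (1 + ‖gradient V x‖ ^ (α * p))) (volume.withDensity ρ) := by
      exact ((hone.add hαp).const_mul _)
    apply hg1.mono
    · apply Continuous.aestronglyMeasurable
      apply Continuous.rpow_const
      · exact (hV.continuous_iteratedFDeriv (le_refl 2)).norm
      · exact fun x => Or.inr hp0
    · apply Filter.Eventually.of_forall
      intro x
      have hfd : ‖iteratedFDeriv ℝ 2 V x‖ ≤ 2 * K' * max 1 (‖gradient V x‖ ^ α) := by
        have := hH' x
        rw [norm_fderiv_fderiv_eq, ← hgrad_eq] at this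
        have h1 : (1:ℝ) ≤ max 1 (‖gradient V x‖ ^ α) := le_max_left _ _
        have h2 : ‖gradient V x‖ ^ α ≤ max 1 (‖gradient V x‖ ^ α) := le_max_right _ _
        have hK'0 : (0:ℝ) < K' := lt_of_lt_of_le one_pos hK'1
        nlinarith
      have hmax0 : (0:ℝ) ≤ max 1 (‖gradient V x‖ ^ α) := le_trans zero_le_one (le_max_left _ _)
      have step1 : ‖iteratedFDeriv ℝ 2 V x‖ ^ p ≤ (2 * K' * max 1 (‖gradient V x‖ ^ α)) ^ p :=
        Real.rpow_le_rpow (norm_nonneg _) hfd hp0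
      have step2 : (2 * K' * max 1 (‖gradient V x‖ ^ α)) ^ p
          = (2 * K') ^ p * (max 1 (‖gradient V x‖ ^ α)) ^ p := by
        rw [Real.mul_rpow (by positivity) hmax0]
      have step3 : (max 1 (‖gradient V x‖ ^ α)) ^ p ≤ 1 + ‖gradient V x‖ ^ (α * p) := by
        rcases le_total (‖gradient V x‖ ^ α) 1 with hc | hc
        · rw [max_eq_left hc, Real.one_rpow]
          have : (0:ℝ) ≤ ‖gradient V x‖ ^ (α * p) := Real.rpow_nonneg (norm_nonneg _) _
          linarith
        · rw [max_eq_right hc, ← Real.rpow_mul (norm_nonneg _)]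
          have : (0:ℝ) ≤ ‖gradient V x‖ ^ (α * p) := Real.rpow_nonneg (norm_nonneg _) _
          linarith
      have hnn1 : (0:ℝ) ≤ ‖iteratedFDeriv ℝ 2 V x‖ ^ p := Real.rpow_nonneg (norm_nonneg _) _
      have hnn2 : (0:ℝ) ≤ (2 * K') ^ p * (1 + ‖gradient V x‖ ^ (α * p)) := by
        have := Real.rpow_nonneg (norm_nonneg (gradient V x)) (α * p)
        have hK'0 : (0:ℝ) < K' := lt_of_lt_of_le one_pos hK'1
        have : (0:ℝ) ≤ (2 * K') ^ p := Real.rpow_nonneg (by positivity) _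
        positivity
      rw [Real.norm_eq_abs, Real.norm_eq_abs, abs_of_nonneg hnn1, abs_of_nonneg hnn2]
      calc ‖iteratedFDeriv ℝ 2 V x‖ ^ p
          ≤ (2 * K') ^ p * (max 1 (‖gradient V x‖ ^ α)) ^ p := by rw [← step2]; exact step1
        _ ≤ (2 * K') ^ p * (1 + ‖gradient V x‖ ^ (α * p)) := by
            apply mul_le_mul_of_nonneg_left step3
            exact Real.rpow_nonneg (by positivity) _
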